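/- The support of the generator arbNat is all of ℕ; that is, for every natural number a, a ∈ ⟦arbNat⟧. -/
import Mathlib


namespace PBT

inductive Gen : Type → Type 1 where
  | pure {α : Type} : α → Gen α
  | pick {α : Type} : Gen α → Gen α → Gen α
  | bind {α β : Type} : Gen α → (α → Gen β) → Gen β
  | indexed {α : Type} : (ℕ → Gen (Option α)) → Gen α
  | assume {α : Type} : (b : Bool) → (b = true → Gen α) → Gen α

instance : Pure Gen := ⟨Gen.pure⟩
instance : Bind Gen := ⟨Gen.bind⟩

def Gen.support : {α : Type} → Gen α → Set α
  | _, .pure a' => {a | a = a'}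
  | _, .pick x y => {a | a ∈ x.support ∨ a ∈ y.support}
  | _, .bind x f => {a | ∃ a', a' ∈ x.support ∧ a ∈ (f a').support}
  | _, .indexed f => {a | (∃ n, some a ∈ (f n).support) ∧
      (∀ a' n, some a' ∈ (f n).support → some a' ∈ (f (n + 1)).support)}
  | _, .assume b k => {a | ∃ h : b = true, a ∈ (k h).support}

notation (priority := high) "⟦" g "⟧" => Gen.support g

def arbNat.go : ℕ → Gen (Option ℕ)
  | 0 => .pure none
  | fuel + 1 =>
    .pick (.pure (some 0))
      (arbNat.go fuel >>= fun on' =>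
        match on' with
        | none => .pure none
        | some n' => .pure (some (1 + n')))

def arbNat : Gen ℕ := .indexed arbNat.go

lemma go_mem (a : ℕ) : some a ∈ ⟦arbNat.go (a + 1)⟧ := by
  induction a with
  | zero => exact Or.inl rfl
  | succ n ih =>
    refine Or.inr ⟨some n, ih, ?_⟩
    simp [Gen.support, Nat.add_comm]

lemma go_none (n : ℕ) : (none : Option ℕ) ∈ ⟦arbNat.go n⟧ := by
  induction n with
  | zero => rfl
  | succ m ih => exact Or.inr ⟨none, ih, rfl⟩

lemma go_mono (a' n : ℕ) (h : some a' ∈ ⟦arbNat.go n⟧) :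
    some a' ∈ ⟦arbNat.go (n + 1)⟧ := by
  induction n generalizing a' with
  | zero => simp [arbNat.go, Gen.support] at h
  | succ m ih =>
    rcases h with h | ⟨on', hon, hmatch⟩
    · exact Or.inl h
    · refine Or.inr ⟨on', ?_, hmatch⟩
      cases on' with
      | none => exact go_none (m + 1)
      | some k => exact ih _ hon

theorem arbNat_support (a : ℕ) : a ∈ ⟦arbNat⟧ :=
  ⟨⟨a + 1, go_mem a⟩, go_mono⟩

end PBT
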